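/- Let ‖·‖ denote the spectral norm and ‖·‖_F the Frobenius norm. Suppose the sign-weighted empirical matrix D(X) = (1/m) Σᵢ sign(⟨Aᵢ,X⟩) Aᵢ satisfies the operator-norm restricted direction preserving property: ‖D(X) − √(2/π)·X/‖X‖_F‖ ≤ δ/√(k′) for all symmetric X with rank(X) ≤ k′ and X ≠ 0 (no corruption, scale √(2/π)). Then the ℓ₁/ℓ₂-RIP holds with parameter δ: for all symmetric X with rank(X) ≤ k′, |(1/m) Σᵢ |⟨Aᵢ, X⟩| − √(2/π)‖X‖_F| ≤ δ ‖X‖_F. -/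

import Mathlib

open Matrix BigOperators

/-- Spectral (operator) norm of a real matrix, via the induced Euclidean operator norm. -/
noncomputable def specNorm {m n : ℕ} (A : Matrix (Fin m) (Fin n) ℝ) : ℝ :=
  ‖(Matrix.toEuclideanLin (𝕜 := ℝ) A).toContinuousLinearMap‖

/-- Frobenius norm of a real matrix. -/
noncomputable def frobNorm {d : ℕ} (A : Matrix (Fin d) (Fin d) ℝ) : ℝ :=
  Real.sqrt (∑ i, ∑ j, (A i j) ^ 2)

/-- Trace inner product of real matrices. -/
def ip {d : ℕ} (A B : Matrix (Fin d) (Fin d) ℝ) : ℝ := ∑ i, ∑ j, A i j * B i j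

/-- Sign function: `1` for `t ≥ 0`, `-1` for `t < 0`. -/
noncomputable def signR (t : ℝ) : ℝ := if t < 0 then -1 else 1

lemma quad_bound {d : ℕ} (Y : Matrix (Fin d) (Fin d) ℝ) (v : Fin d → ℝ)
    (hv : ∑ i, v i ^ 2 = 1) : |∑ i, ∑ j, v i * Y i j * v j| ≤ specNorm Y := by
  set L := (Matrix.toEuclideanLin (𝕜 := ℝ) Y).toContinuousLinearMap with hL
  set w : EuclideanSpace ℝ (Fin d) := (WithLp.equiv 2 (Fin d → ℝ)).symm v with hwdef
  have hw : ‖w‖ = 1 := by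
    rw [EuclideanSpace.norm_eq]
    have h1 : ∀ i, ‖w i‖ ^ 2 = v i ^ 2 := fun i => by
      simp [hwdef, WithLp.equiv_symm_apply, PiLp.toLp_apply, sq_abs]
    simp_rw [h1, hv, Real.sqrt_one]
  have hiww : (inner ℝ w (L w) : ℝ) = ∑ i, ∑ j, v i * Y i j * v j := by
    have hLw : L w = (WithLp.equiv 2 (Fin d → ℝ)).symm (Y *ᵥ v) := by
      simp [hL, hwdef]
    rw [hLw, PiLp.inner_apply]
    simp only [hwdef, WithLp.equiv_symm_apply, PiLp.toLp_apply, RCLike.inner_apply, conj_trivial]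
    refine Finset.sum_congr rfl fun i _ => ?_
    rw [Matrix.mulVec, dotProduct, Finset.sum_mul]
    exact Finset.sum_congr rfl fun j _ => by ring
  rw [← hiww]
  calc |(inner ℝ w (L w) : ℝ)| ≤ ‖w‖ * ‖L w‖ := abs_real_inner_le_norm w (L w)
    _ ≤ ‖w‖ * (‖L‖ * ‖w‖) := by gcongr; exact L.le_opNorm w
    _ = ‖L‖ := by rw [hw]; ring

lemma key_bound {d k' : ℕ} (Y X : Matrix (Fin d) (Fin d) ℝ) (hH : X.IsHermitian)
    (hrank : X.rank ≤ k') :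
    |ip Y X| ≤ Real.sqrt k' * specNorm Y * frobNorm X := by
  set e := hH.eigenvalues with he
  set u : Fin d → (Fin d → ℝ) := fun k => ⇑(hH.eigenvectorBasis k) with hu
  have hXent : ∀ i j, X i j = ∑ k, e k * u k i * u k j := by
    intro i j
    conv_lhs => rw [hH.spectral_theorem, Unitary.conjStarAlgAut_apply]
    rw [Matrix.mul_apply]
    refine Finset.sum_congr rfl fun k _ => ?_
    rw [Matrix.mul_diagonal, Matrix.star_apply]
    simp only [Function.comp_apply, hH.eigenvectorUnitary_apply, hu, he, star_trivial,
      RCLike.ofReal_real_eq_id, id_eq]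
    ring
  have hunit : ∀ k, ∑ i, u k i ^ 2 = 1 := by
    intro k
    have h1 : ‖hH.eigenvectorBasis k‖ = 1 := hH.eigenvectorBasis.orthonormal.1 k
    have h2 := EuclideanSpace.norm_eq (hH.eigenvectorBasis k)
    rw [h1] at h2
    have h3 : ∑ i, u k i ^ 2 = ∑ i, ‖(hH.eigenvectorBasis k) i‖ ^ 2 := by
      refine Finset.sum_congr rfl fun i _ => by simp [hu, sq_abs]
    rw [h3]
    have := congrArg (· ^ 2) h2.symm
    simpa [Real.sq_sqrt (Finset.sum_nonneg fun i _ => sq_nonneg _)] using this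
  have expand : ∀ Z : Matrix (Fin d) (Fin d) ℝ,
      ip Z X = ∑ k, e k * (∑ i, ∑ j, u k i * Z i j * u k j) := by
    intro Z
    calc ip Z X = ∑ i, ∑ j, ∑ k, e k * (u k i * Z i j * u k j) := by
          refine Finset.sum_congr rfl fun i _ => Finset.sum_congr rfl fun j _ => ?_
          rw [hXent i j, Finset.mul_sum]
          exact Finset.sum_congr rfl fun k _ => by ring
      _ = ∑ i, ∑ k, ∑ j, e k * (u k i * Z i j * u k j) := by
          exact Finset.sum_congr rfl fun i _ => Finset.sum_comm
      _ = ∑ k, ∑ i, ∑ j, e k * (u k i * Z i j * u k j) := Finset.sum_comm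
      _ = ∑ k, e k * (∑ i, ∑ j, u k i * Z i j * u k j) := by
          refine Finset.sum_congr rfl fun k _ => ?_
          simp [Finset.mul_sum]
  have hfrob_nonneg : (0:ℝ) ≤ frobNorm X := Real.sqrt_nonneg _
  have hfrob2 : frobNorm X ^ 2 = ∑ k, e k ^ 2 := by
    have h1 : frobNorm X ^ 2 = ip X X := by
      rw [frobNorm, Real.sq_sqrt (by positivity)]
      simp [ip, sq]
    rw [h1, expand X]
    refine Finset.sum_congr rfl fun k _ => ?_
    have hmv : X *ᵥ u k = e k • u k := hH.mulVec_eigenvectorBasis k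
    have h2 : ∑ i, ∑ j, u k i * X i j * u k j = ∑ i, u k i * (X *ᵥ u k) i := by
      refine Finset.sum_congr rfl fun i _ => ?_
      rw [Matrix.mulVec, dotProduct, Finset.mul_sum]
      exact Finset.sum_congr rfl fun j _ => by ring
    rw [h2, hmv]
    simp only [Pi.smul_apply, smul_eq_mul]
    have : ∑ i, u k i * (e k * u k i) = e k * ∑ i, u k i ^ 2 := by
      rw [Finset.mul_sum]; exact Finset.sum_congr rfl fun i _ => by ring
    rw [this, hunit k, mul_one, sq]
  classical
  set s : Finset (Fin d) := Finset.univ.filter (fun k => e k ≠ 0) with hs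
  have hcard : s.card ≤ k' := by
    have h1 := hH.rank_eq_card_non_zero_eigs
    have h2 : Fintype.card {i // e i ≠ 0} = s.card := by
      rw [hs]; exact Fintype.card_subtype _
    rw [he] at h2
    rw [h1, h2] at hrank
    exact hrank
  have hq : ∀ k, |∑ i, ∑ j, u k i * Y i j * u k j| ≤ specNorm Y :=
    fun k => quad_bound Y (u k) (hunit k)
  have hspec_nonneg : (0:ℝ) ≤ specNorm Y := norm_nonneg _
  rw [expand Y]
  have hsum : ∑ k, e k * (∑ i, ∑ j, u k i * Y i j * u k j)
      = ∑ k ∈ s, e k * (∑ i, ∑ j, u k i * Y i j * u k j) := by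
    symm
    rw [hs]
    apply Finset.sum_filter_of_ne
    intro k _ hfk h0
    exact hfk (by rw [h0, zero_mul])
  rw [hsum]
  have habs : ∑ k ∈ s, |e k| ≤ Real.sqrt k' * frobNorm X := by
    have cs : (∑ k ∈ s, |e k|) ^ 2 ≤ (s.card : ℝ) * ∑ k ∈ s, |e k| ^ 2 :=
      sq_sum_le_card_mul_sum_sq
    have h3 : ∑ k ∈ s, |e k| ^ 2 ≤ ∑ k, e k ^ 2 := by
      simp_rw [sq_abs]
      exact Finset.sum_le_sum_of_subset_of_nonneg (Finset.subset_univ s)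
        (fun k _ _ => sq_nonneg _)
    have h4 : (∑ k ∈ s, |e k|) ^ 2 ≤ (k' : ℝ) * frobNorm X ^ 2 := by
      calc (∑ k ∈ s, |e k|) ^ 2 ≤ (s.card : ℝ) * ∑ k ∈ s, |e k| ^ 2 := cs
        _ ≤ (k' : ℝ) * frobNorm X ^ 2 := by
            rw [hfrob2]
            exact mul_le_mul (by exact_mod_cast hcard) h3
              (Finset.sum_nonneg fun k _ => sq_nonneg _) (Nat.cast_nonneg _)
    have h5 : (0:ℝ) ≤ ∑ k ∈ s, |e k| := Finset.sum_nonneg fun k _ => abs_nonneg _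
    calc ∑ k ∈ s, |e k| = Real.sqrt ((∑ k ∈ s, |e k|) ^ 2) := (Real.sqrt_sq h5).symm
      _ ≤ Real.sqrt ((k' : ℝ) * frobNorm X ^ 2) := Real.sqrt_le_sqrt h4
      _ = Real.sqrt k' * frobNorm X := by
          rw [Real.sqrt_mul (Nat.cast_nonneg _), Real.sqrt_sq hfrob_nonneg]
  calc |∑ k ∈ s, e k * (∑ i, ∑ j, u k i * Y i j * u k j)|
      ≤ ∑ k ∈ s, |e k * (∑ i, ∑ j, u k i * Y i j * u k j)| :=
        Finset.abs_sum_le_sum_abs _ _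
    _ ≤ ∑ k ∈ s, |e k| * specNorm Y := by
        refine Finset.sum_le_sum fun k _ => ?_
        rw [abs_mul]
        exact mul_le_mul_of_nonneg_left (hq k) (abs_nonneg _)
    _ = (∑ k ∈ s, |e k|) * specNorm Y := by rw [Finset.sum_mul]
    _ ≤ (Real.sqrt k' * frobNorm X) * specNorm Y :=
        mul_le_mul_of_nonneg_right habs hspec_nonneg
    _ = Real.sqrt k' * specNorm Y * frobNorm X := by ring

lemma ip_sum_left {d n : ℕ} (M : Fin n → Matrix (Fin d) (Fin d) ℝ)
    (X : Matrix (Fin d) (Fin d) ℝ) : ip (∑ t, M t) X = ∑ t, ip (M t) X := by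
  simp only [ip, Matrix.sum_apply, Finset.sum_mul]
  calc ∑ i, ∑ j, ∑ t, M t i j * X i j
      = ∑ i, ∑ t, ∑ j, M t i j * X i j :=
        Finset.sum_congr rfl fun i _ => Finset.sum_comm
    _ = ∑ t, ∑ i, ∑ j, M t i j * X i j := Finset.sum_comm

lemma ip_smul_left {d : ℕ} (a : ℝ) (B X : Matrix (Fin d) (Fin d) ℝ) :
    ip (a • B) X = a * ip B X := by
  simp [ip, Finset.mul_sum, mul_assoc]

lemma ip_sub_left {d : ℕ} (B C X : Matrix (Fin d) (Fin d) ℝ) :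
    ip (B - C) X = ip B X - ip C X := by
  simp [ip, sub_mul, Finset.sum_sub_distrib]

/-- The operator-norm restricted direction preserving property (with no corruption and scale
`√(2/π)`, parameter `δ/√k'`) implies the `ℓ₁/ℓ₂`-RIP with parameter `δ`. -/
theorem stmt18 {d m k' : ℕ} (A : Fin m → Matrix (Fin d) (Fin d) ℝ) (δ : ℝ)
    (hRDPP : ∀ X : Matrix (Fin d) (Fin d) ℝ, Xᵀ = X → X.rank ≤ k' → X ≠ 0 →
      specNorm ((m : ℝ)⁻¹ • ∑ i, signR (ip (A i) X) • A i
          - (Real.sqrt (2 / Real.pi) / frobNorm X) • X)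
        ≤ δ / Real.sqrt k') :
    ∀ X : Matrix (Fin d) (Fin d) ℝ, Xᵀ = X → X.rank ≤ k' →
      |(m : ℝ)⁻¹ * ∑ i, |ip (A i) X| - Real.sqrt (2 / Real.pi) * frobNorm X|
        ≤ δ * frobNorm X := by
  intro X hXt hrank
  by_cases hX0 : X = 0
  · subst hX0
    simp [ip, frobNorm]
  · have hH : X.IsHermitian := by
      show Xᴴ = X
      ext i j
      rw [Matrix.conjTranspose_apply, star_trivial]
      exact congrFun (congrFun hXt i) j
    have hf0 : 0 < frobNorm X := by
      have hnn : (0:ℝ) ≤ ∑ i, ∑ j, X i j ^ 2 :=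
        Finset.sum_nonneg fun i _ => Finset.sum_nonneg fun j _ => sq_nonneg _
      rcases hnn.lt_or_eq with h | h
      · exact Real.sqrt_pos.mpr h
      · exfalso; apply hX0
        ext i j
        have h1 := (Finset.sum_eq_zero_iff_of_nonneg
          (fun i _ => Finset.sum_nonneg fun j _ => sq_nonneg (X i j))).mp h.symm i
          (Finset.mem_univ i)
        have h2 := (Finset.sum_eq_zero_iff_of_nonneg
          (fun j _ => sq_nonneg (X i j))).mp h1 j (Finset.mem_univ j)
        simpa using pow_eq_zero_iff (n := 2) (by norm_num) |>.mp h2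
    have hk0 : k' ≠ 0 := by
      intro h
      subst h
      have hr0 : Module.finrank ℝ (LinearMap.range X.mulVecLin) = 0 :=
        Nat.le_zero.mp hrank
      apply hX0
      have hrange : LinearMap.range X.mulVecLin = ⊥ :=
        Submodule.finrank_eq_zero.mp hr0
      ext i j
      have h1 : X.mulVecLin (Pi.single j 1) = 0 := by
        have h2 := LinearMap.mem_range_self X.mulVecLin (Pi.single j 1)
        rw [hrange] at h2
        simpa using h2
      have h2 := congrFun h1 i
      simpa [Matrix.mulVecLin_apply, Matrix.mulVec_single] using h2
    have hsk : 0 < Real.sqrt k' :=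
      Real.sqrt_pos.mpr (by exact_mod_cast Nat.pos_of_ne_zero hk0)
    have hsign : ∀ t : ℝ, signR t * t = |t| := by
      intro t
      rw [signR]
      split
      · rw [abs_of_neg (by assumption)]; ring
      · rw [abs_of_nonneg (not_lt.mp (by assumption))]
        ring
    have hipXX : ip X X = frobNorm X ^ 2 := by
      rw [frobNorm, Real.sq_sqrt (by positivity)]
      simp [ip, sq]
    have hipY : ip ((m : ℝ)⁻¹ • ∑ i, signR (ip (A i) X) • A i
        - (Real.sqrt (2 / Real.pi) / frobNorm X) • X) X
        = (m : ℝ)⁻¹ * ∑ i, |ip (A i) X| - Real.sqrt (2 / Real.pi) * frobNorm X := by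
      rw [ip_sub_left, ip_smul_left, ip_smul_left, ip_sum_left, hipXX]
      have h1 : ∀ t, ip (signR (ip (A t) X) • A t) X = |ip (A t) X| := by
        intro t
        rw [ip_smul_left, hsign]
      simp_rw [h1]
      rw [sq]
      field_simp
    rw [← hipY]
    calc |ip ((m : ℝ)⁻¹ • ∑ i, signR (ip (A i) X) • A i
            - (Real.sqrt (2 / Real.pi) / frobNorm X) • X) X|
        ≤ Real.sqrt k' * specNorm ((m : ℝ)⁻¹ • ∑ i, signR (ip (A i) X) • A i
            - (Real.sqrt (2 / Real.pi) / frobNorm X) • X) * frobNorm X :=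
          key_bound _ X hH hrank
      _ ≤ Real.sqrt k' * (δ / Real.sqrt k') * frobNorm X := by
          refine mul_le_mul_of_nonneg_right ?_ hf0.le
          exact mul_le_mul_of_nonneg_left (hRDPP X hXt hrank hX0) hsk.le
      _ = δ * frobNorm X := by
          rw [mul_comm (Real.sqrt k'), div_mul_cancel₀ _ hsk.ne']
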